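/- Let (P^t)_{t≥0} be a measurable semigroup of Markov kernels on a measurable space (E,ℰ), let β > 0, let V : E → [1,∞) be measurable with P^t V(x) < ∞ for all t, x and R_β V(x) < ∞ for all x, let φ : [1,∞) → (0,∞) be nondecreasing, let C ∈ ℰ and b ∈ [0,∞). Assume the resolvent drift condition: R_β V(x) ≤ V(x) − φ(V(x)) + b·1_C(x) for all x ∈ E. Then for all s ≥ 0 and x ∈ E, P^s(R_β V)(x) + β ∫₀^s P^u(φ∘V)(x) du ≤ R_β V(x) + β b ∫₀^s P^u(1_C)(x) du. -/

import Mathlib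

open MeasureTheory ProbabilityTheory
open scoped ENNReal

lemma aux_exp_lintegral (β : ℝ) (hβ : 0 < β) (m : ℝ) :
    ∫⁻ u in Set.Ioc (0:ℝ) m, ENNReal.ofReal (β * Real.exp (β * u)) =
      ENNReal.ofReal (Real.exp (β * m) - 1) := by
  rcases le_or_gt m 0 with hm | hm
  · rw [Set.Ioc_eq_empty (by simpa using hm : ¬ (0:ℝ) < m)]
    have hbm : β * m ≤ 0 := mul_nonpos_of_nonneg_of_nonpos hβ.le hm
    have : Real.exp (β * m) ≤ 1 := Real.exp_le_one_iff.mpr hbm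
    rw [Measure.restrict_empty, lintegral_zero_measure]
    exact (ENNReal.ofReal_eq_zero.mpr (by linarith)).symm
  · have hcont : Continuous fun u : ℝ => β * Real.exp (β * u) := by continuity
    rw [← ofReal_integral_eq_lintegral_ofReal
        ((hcont.integrableOn_Icc (a := 0) (b := m)).mono_set Set.Ioc_subset_Icc_self)
        (Filter.Eventually.of_forall fun u => by positivity)]
    congr 1
    rw [← intervalIntegral.integral_of_le hm.le]
    have hderiv : ∀ u ∈ Set.uIcc (0:ℝ) m,
        HasDerivAt (fun y => Real.exp (β * y)) (β * Real.exp (β * u)) u := by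
      intro u _
      exact ((Real.hasDerivAt_exp (β * u)).comp u ((hasDerivAt_id u).const_mul β)).congr_deriv
        (by ring)
    rw [intervalIntegral.integral_eq_sub_of_hasDerivAt hderiv
        (hcont.intervalIntegrable 0 m)]
    simp

lemma aux_J (β : ℝ) (hβ : 0 < β) {s : ℝ} (hs : 0 ≤ s) (t : ℝ) :
    ∫⁻ u in Set.Ioc (0:ℝ) s ∩ Set.Iio t, ENNReal.ofReal (β * Real.exp (β * u)) =
      ENNReal.ofReal (Real.exp (β * min t s) - 1) := by
  rw [← aux_exp_lintegral β hβ (min t s)]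
  apply setLIntegral_congr
  rcases le_or_gt t 0 with ht | ht
  · have h1 : Set.Ioc (0:ℝ) s ∩ Set.Iio t = ∅ := by
      ext u; simp only [Set.mem_inter_iff, Set.mem_Ioc, Set.mem_Iio, Set.mem_empty_iff_false,
        iff_false]
      rintro ⟨⟨h0, _⟩, hu⟩; linarith
    have h2 : Set.Ioc (0:ℝ) (min t s) = ∅ :=
      Set.Ioc_eq_empty (by simp; intro h; linarith [min_le_left t s])
    rw [h1, h2]; exact Filter.EventuallyEq.rfl
  · rcases le_or_gt t s with hts | hst
    · have h1 : Set.Ioc (0:ℝ) s ∩ Set.Iio t = Set.Ioo 0 t := by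
        ext u; simp only [Set.mem_inter_iff, Set.mem_Ioc, Set.mem_Iio, Set.mem_Ioo]
        constructor
        · rintro ⟨⟨h0, _⟩, hu⟩; exact ⟨h0, hu⟩
        · rintro ⟨h0, hu⟩; exact ⟨⟨h0, by linarith⟩, hu⟩
      rw [h1, min_eq_left hts]
      exact Ioo_ae_eq_Ioc
    · have h1 : Set.Ioc (0:ℝ) s ∩ Set.Iio t = Set.Ioc 0 s := by
        apply Set.inter_eq_left.mpr
        intro u hu; exact lt_of_le_of_lt hu.2 hst
      rw [h1, min_eq_right hst.le]; exact Filter.EventuallyEq.rfl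

lemma aux_chapman {E : Type*} [MeasurableSpace E] (P : ℝ → Kernel E E)
    (hsemi : ∀ s t : ℝ, 0 ≤ s → 0 ≤ t → ∀ x : E, ∀ A : Set E, MeasurableSet A →
      P (t + s) x A = ∫⁻ y, P s y A ∂(P t x))
    {f : E → ℝ≥0∞} (hf : Measurable f) {s t : ℝ} (hs : 0 ≤ s) (ht : 0 ≤ t) (x : E) :
    ∫⁻ y, ∫⁻ z, f z ∂(P t y) ∂(P s x) = ∫⁻ z, f z ∂(P (s + t) x) := by
  have hbind : P (s + t) x = (P s x).bind (fun y => P t y) := by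
    ext A hA
    rw [Measure.bind_apply hA (P t).measurable.aemeasurable]
    exact hsemi t s ht hs x A hA
  rw [hbind, Measure.lintegral_bind (P t).measurable.aemeasurable hf.aemeasurable]



/-- If the resolvent kernel satisfies the drift condition
`R_β V(x) ≤ V(x) - φ(V(x)) + b·1_C(x)`, then the semigroup satisfies the integral drift
inequality `P^s(R_β V)(x) + β ∫₀^s P^u(φ∘V)(x) du ≤ R_β V(x) + β b ∫₀^s P^u(1_C)(x) du`
for all `s ≥ 0` and `x`, i.e. the drift condition `D(C, R_β V, βφ, βb)` holds. -/
theorem resolvent_drift_implies_semigroup_drift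
    {E : Type*} [MeasurableSpace E]
    (P : ℝ → Kernel E E)
    (hMarkov : ∀ t : ℝ, IsMarkovKernel (P t))
    (hP0 : ∀ x : E, P 0 x = MeasureTheory.Measure.dirac x)
    (hsemi : ∀ s t : ℝ, 0 ≤ s → 0 ≤ t → ∀ x : E, ∀ A : Set E, MeasurableSet A →
      P (t + s) x A = ∫⁻ y, P s y A ∂(P t x))
    (hmeas : ∀ f : E → ℝ≥0∞, Measurable f →
      Measurable (fun p : ℝ × E => ∫⁻ y, f y ∂(P p.1 p.2)))
    (β : ℝ) (hβ : 0 < β)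
    (V : E → ℝ) (hV_meas : Measurable V) (hV_one : ∀ y : E, 1 ≤ V y)
    (PV : ℝ → E → ℝ≥0∞)
    (hPV_def : ∀ t : ℝ, ∀ x : E, PV t x = ∫⁻ y, ENNReal.ofReal (V y) ∂(P t x))
    (hPV_fin : ∀ t : ℝ, 0 ≤ t → ∀ x : E, PV t x < ⊤)
    (RV : E → ℝ≥0∞)
    (hRV_def : ∀ x : E,
      RV x = ∫⁻ t in Set.Ioi (0:ℝ), ENNReal.ofReal (β * Real.exp (-β * t)) * PV t x)
    (hRV_fin : ∀ x : E, RV x < ⊤)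
    (φ : ℝ → ℝ)
    (hφ_pos : ∀ u : ℝ, 1 ≤ u → 0 < φ u)
    (hφ_mono : MonotoneOn φ (Set.Ici 1))
    (C : Set E) (hC : MeasurableSet C)
    (b : ℝ) (hb : 0 ≤ b)
    (hdrift : ∀ x : E,
      (RV x).toReal ≤ V x - φ (V x) + b * C.indicator (fun _ => (1:ℝ)) x) :
    ∀ s : ℝ, 0 ≤ s → ∀ x : E,
      (∫⁻ y, RV y ∂(P s x))
          + ENNReal.ofReal β *
              (∫⁻ u in Set.Ioc (0:ℝ) s, ∫⁻ y, ENNReal.ofReal (φ (V y)) ∂(P u x))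
        ≤ RV x
          + ENNReal.ofReal β * ENNReal.ofReal b *
              (∫⁻ u in Set.Ioc (0:ℝ) s, P u x C) := by
  intro s hs x
  -- measurability preliminaries
  have hVm' : Measurable fun y => ENNReal.ofReal (V y) :=
    ENNReal.measurable_ofReal.comp hV_meas
  have hPVm : Measurable fun p : ℝ × E => PV p.1 p.2 := by
    have h := hmeas _ hVm'
    have he : (fun p : ℝ × E => PV p.1 p.2)
        = fun p : ℝ × E => ∫⁻ y, ENNReal.ofReal (V y) ∂(P p.1 p.2) :=
      funext fun p => hPV_def p.1 p.2
    rw [he]; exact h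
  have hwm : Measurable fun t : ℝ => ENNReal.ofReal (β * Real.exp (-β * t)) :=
    ENNReal.measurable_ofReal.comp
      (measurable_const.mul (Real.measurable_exp.comp (measurable_id.const_mul (-β))))
  have hfm : Measurable fun t : ℝ => PV t x := hPVm.comp measurable_prodMk_right
  have hRVm : Measurable RV := by
    have h : Measurable fun z : E =>
        ∫⁻ t, ENNReal.ofReal (β * Real.exp (-β * t)) * PV t z
          ∂((volume : Measure ℝ).restrict (Set.Ioi (0:ℝ))) :=
      Measurable.lintegral_prod_left ((hwm.comp measurable_fst).mul hPVm)
    have he : RV = fun z : E =>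
        ∫⁻ t in Set.Ioi (0:ℝ), ENNReal.ofReal (β * Real.exp (-β * t)) * PV t z :=
      funext hRV_def
    rw [he]; exact h
  have hFm : Measurable fun u : ℝ => ∫⁻ y, RV y ∂(P u x) :=
    (hmeas RV hRVm).comp measurable_prodMk_right
  have hφVm : Measurable fun y : E => ENNReal.ofReal (φ (V y)) := by
    have hψ : Monotone fun u : ℝ => φ (max u 1) := by
      intro u v huv
      exact hφ_mono (Set.mem_Ici.mpr (le_max_right u 1)) (Set.mem_Ici.mpr (le_max_right v 1))
        (max_le_max huv le_rfl)
    have he : (fun y : E => φ (V y)) = fun y => φ (max (V y) 1) :=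
      funext fun y => by rw [max_eq_left (hV_one y)]
    exact ENNReal.measurable_ofReal.comp (he ▸ (hψ.measurable.comp hV_meas))
  have hΦm : Measurable fun u : ℝ => ∫⁻ y, ENNReal.ofReal (φ (V y)) ∂(P u x) :=
    (hmeas _ hφVm).comp measurable_prodMk_right
  have hICm : Measurable fun u : ℝ => P u x C := by
    have h := (hmeas (C.indicator fun _ => (1:ℝ≥0∞)) (measurable_const.indicator hC)).comp
      (measurable_prodMk_right (y := x))
    simpa [lintegral_indicator_const hC, Function.comp_def] using h
  -- semigroup property for PV
  have hPV_semi : ∀ u t : ℝ, 0 ≤ u → 0 ≤ t →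
      ∫⁻ y, PV t y ∂(P u x) = PV (u + t) x := by
    intro u t hu ht
    rw [hPV_def (u + t) x, ← aux_chapman P hsemi hVm' hu ht x]
    exact lintegral_congr fun y => hPV_def t y
  -- K1 : P^u (RV) in terms of shifted resolvent integral
  have hK1 : ∀ u : ℝ, 0 ≤ u → ∫⁻ y, RV y ∂(P u x)
      = ENNReal.ofReal (Real.exp (β * u)) *
          ∫⁻ t in Set.Ioi u, ENNReal.ofReal (β * Real.exp (-β * t)) * PV t x := by
    intro u hu
    haveI : IsProbabilityMeasure (P u x) := (hMarkov u).isProbabilityMeasure x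
    have h1 : ∫⁻ y, RV y ∂(P u x)
        = ∫⁻ t in Set.Ioi (0:ℝ), ∫⁻ y,
            ENNReal.ofReal (β * Real.exp (-β * t)) * PV t y ∂(P u x) := by
      rw [lintegral_congr (fun y => hRV_def y)]
      exact lintegral_lintegral_swap
        (((hwm.comp measurable_snd).mul (hPVm.comp measurable_swap)).aemeasurable)
    have h2 : ∫⁻ t in Set.Ioi (0:ℝ), ∫⁻ y,
          ENNReal.ofReal (β * Real.exp (-β * t)) * PV t y ∂(P u x)
        = ∫⁻ t in Set.Ioi (0:ℝ),
            ENNReal.ofReal (β * Real.exp (-β * t)) * PV (u + t) x := by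
      apply setLIntegral_congr_fun measurableSet_Ioi
      intro t ht; dsimp only
      rw [lintegral_const_mul' _ _ ENNReal.ofReal_ne_top, hPV_semi u t hu (le_of_lt (Set.mem_Ioi.mp ht))]
    set g : ℝ → ℝ≥0∞ := fun t => (Set.Ioi u).indicator
      (fun t => ENNReal.ofReal (β * Real.exp (-β * (t - u))) * PV t x) t with hg
    have h3 : ∫⁻ t in Set.Ioi (0:ℝ),
          ENNReal.ofReal (β * Real.exp (-β * t)) * PV (u + t) x
        = ∫⁻ t, g (u + t) := by
      rw [← lintegral_indicator measurableSet_Ioi]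
      apply lintegral_congr; intro t
      simp only [hg, Set.indicator_apply, Set.mem_Ioi, add_sub_cancel_left,
        lt_add_iff_pos_right]
    have h4 : ∫⁻ t, g (u + t) = ∫⁻ t, g t := lintegral_add_left_eq_self g u
    have h5 : ∫⁻ t, g t
        = ∫⁻ t in Set.Ioi u, ENNReal.ofReal (β * Real.exp (-β * (t - u))) * PV t x := by
      rw [hg, lintegral_indicator measurableSet_Ioi]
    have h6 : ∫⁻ t in Set.Ioi u, ENNReal.ofReal (β * Real.exp (-β * (t - u))) * PV t x
        = ENNReal.ofReal (Real.exp (β * u)) *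
            ∫⁻ t in Set.Ioi u, ENNReal.ofReal (β * Real.exp (-β * t)) * PV t x := by
      rw [← lintegral_const_mul' _ _ ENNReal.ofReal_ne_top]
      apply lintegral_congr; intro t
      rw [← mul_assoc, ← ENNReal.ofReal_mul (Real.exp_nonneg _)]
      congr 2
      rw [show -β * (t - u) = β * u + -β * t by ring, Real.exp_add]
      ring
    rw [h1, h2, h3, h4, h5, h6]
  -- the comparison function T
  set T : ℝ≥0∞ := ∫⁻ t in Set.Ioi (0:ℝ),
      ENNReal.ofReal (β * Real.exp (β * (min t s - t))) * PV t x with hT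
  -- the double-integral kernel G
  set G : ℝ → ℝ → ℝ≥0∞ := fun u t => (Set.Iio t).indicator
      (fun v => ENNReal.ofReal (β * Real.exp (β * v))) u *
      (ENNReal.ofReal (β * Real.exp (-β * t)) * PV t x) with hG
  have hGm : Measurable (Function.uncurry G) := by
    have he : Function.uncurry G = fun p : ℝ × ℝ =>
        Set.indicator {q : ℝ × ℝ | q.1 < q.2}
          (fun q => ENNReal.ofReal (β * Real.exp (β * q.1))) p *
        (ENNReal.ofReal (β * Real.exp (-β * p.2)) * PV p.2 x) := by
      funext p
      simp only [Function.uncurry, hG, Set.indicator_apply, Set.mem_Iio, Set.mem_setOf_eq]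
    rw [he]
    exact (Measurable.indicator
        ((ENNReal.measurable_ofReal.comp
          (measurable_const.mul (Real.measurable_exp.comp (measurable_fst.const_mul β)))))
        (measurableSet_lt measurable_fst measurable_snd)).mul
      ((hwm.comp measurable_snd).mul (hfm.comp measurable_snd))
  -- K3 : RV x + β ∫ F = T
  have hGpt : ∀ u ∈ Set.Ioc (0:ℝ) s,
      ENNReal.ofReal β * (∫⁻ y, RV y ∂(P u x)) = ∫⁻ t, G u t := by
    intro u hu
    rw [hK1 u hu.1.le, ← mul_assoc, ← ENNReal.ofReal_mul hβ.le,
      ← lintegral_const_mul' _ _ ENNReal.ofReal_ne_top,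
      ← lintegral_indicator measurableSet_Ioi]
    apply lintegral_congr; intro t
    simp only [hG, Set.indicator_apply, Set.mem_Ioi, Set.mem_Iio]
    by_cases h : u < t
    · simp [h]
    · simp [h]
  have hK3 : RV x + ENNReal.ofReal β * (∫⁻ u in Set.Ioc (0:ℝ) s, ∫⁻ y, RV y ∂(P u x)) = T := by
    have h1 : ENNReal.ofReal β * (∫⁻ u in Set.Ioc (0:ℝ) s, ∫⁻ y, RV y ∂(P u x))
        = ∫⁻ u in Set.Ioc (0:ℝ) s, ∫⁻ t, G u t := by
      rw [← lintegral_const_mul' _ _ ENNReal.ofReal_ne_top]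
      exact setLIntegral_congr_fun measurableSet_Ioc hGpt
    have h2 : ∫⁻ u in Set.Ioc (0:ℝ) s, ∫⁻ t, G u t = ∫⁻ t, ∫⁻ u in Set.Ioc (0:ℝ) s, G u t :=
      lintegral_lintegral_swap hGm.aemeasurable
    have h3 : ∀ t : ℝ, ∫⁻ u in Set.Ioc (0:ℝ) s, G u t
        = ENNReal.ofReal (Real.exp (β * min t s) - 1) *
            (ENNReal.ofReal (β * Real.exp (-β * t)) * PV t x) := by
      intro t
      simp only [hG]
      have hmind : Measurable fun u : ℝ =>
          (Set.Iio t).indicator (fun v => ENNReal.ofReal (β * Real.exp (β * v))) u :=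
        Measurable.indicator (ENNReal.measurable_ofReal.comp
          (measurable_const.mul (Real.measurable_exp.comp (measurable_id.const_mul β))))
          measurableSet_Iio
      rw [lintegral_mul_const _ hmind,
        lintegral_indicator measurableSet_Iio, Measure.restrict_restrict measurableSet_Iio,
        Set.inter_comm, aux_J β hβ hs t]
    have h4 : (fun t : ℝ => ENNReal.ofReal (Real.exp (β * min t s) - 1) *
          (ENNReal.ofReal (β * Real.exp (-β * t)) * PV t x))
        = (Set.Ioi (0:ℝ)).indicator (fun t => ENNReal.ofReal (Real.exp (β * min t s) - 1) *
          (ENNReal.ofReal (β * Real.exp (-β * t)) * PV t x)) := by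
      funext t
      by_cases ht : 0 < t
      · rw [Set.indicator_of_mem (Set.mem_Ioi.mpr ht)]
      · rw [Set.indicator_of_notMem (by simpa using ht)]
        have hmin : min t s = t := min_eq_left (le_trans (not_lt.mp ht) hs)
        have hexp : Real.exp (β * min t s) ≤ 1 := by
          rw [hmin]
          exact Real.exp_le_one_iff.mpr (mul_nonpos_of_nonneg_of_nonpos hβ.le (not_lt.mp ht))
        rw [ENNReal.ofReal_eq_zero.mpr (by linarith), zero_mul]
    have h5 : RV x + ∫⁻ t in Set.Ioi (0:ℝ),
        ENNReal.ofReal (Real.exp (β * min t s) - 1) *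
          (ENNReal.ofReal (β * Real.exp (-β * t)) * PV t x) = T := by
      rw [hRV_def x, hT, ← lintegral_add_left (f := fun t => ENNReal.ofReal (β * Real.exp (-β * t)) * PV t x) (hwm.mul hfm)]
      apply setLIntegral_congr_fun measurableSet_Ioi
      intro t ht
      have hm0 : (0:ℝ) ≤ min t s := le_min (le_of_lt ht) hs
      have h1' : (0:ℝ) ≤ Real.exp (β * min t s) - 1 := by
        have := Real.one_le_exp (by positivity : (0:ℝ) ≤ β * min t s)
        linarith
      have hq : (1:ℝ≥0∞) + ENNReal.ofReal (Real.exp (β * min t s) - 1)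
          = ENNReal.ofReal (Real.exp (β * min t s)) := by
        rw [← ENNReal.ofReal_one, ← ENNReal.ofReal_add zero_le_one h1']
        norm_num
      calc ENNReal.ofReal (β * Real.exp (-β * t)) * PV t x
            + ENNReal.ofReal (Real.exp (β * min t s) - 1) *
              (ENNReal.ofReal (β * Real.exp (-β * t)) * PV t x)
          = ((1:ℝ≥0∞) + ENNReal.ofReal (Real.exp (β * min t s) - 1)) *
              (ENNReal.ofReal (β * Real.exp (-β * t)) * PV t x) := by ring
        _ = ENNReal.ofReal (Real.exp (β * min t s)) *
              (ENNReal.ofReal (β * Real.exp (-β * t)) * PV t x) := by rw [hq]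
        _ = ENNReal.ofReal (β * Real.exp (β * (min t s - t))) * PV t x := by
              rw [← mul_assoc, ← ENNReal.ofReal_mul (Real.exp_nonneg _)]
              congr 2
              rw [show β * (min t s - t) = β * min t s + -β * t by ring, Real.exp_add]
              ring
    rw [h1, h2, lintegral_congr h3, h4, lintegral_indicator measurableSet_Ioi]
    exact h5
  -- K2 : T = β ∫ PV + P^s RV
  have hK2 : T = ENNReal.ofReal β * (∫⁻ t in Set.Ioc (0:ℝ) s, PV t x)
      + ∫⁻ y, RV y ∂(P s x) := by
    have hdisj : Disjoint (Set.Ioc (0:ℝ) s) (Set.Ioi s) :=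
      Set.disjoint_left.mpr fun t h1 h2 => absurd h1.2 (not_le.mpr h2)
    rw [hT, ← Set.Ioc_union_Ioi_eq_Ioi hs, lintegral_union measurableSet_Ioi hdisj]
    congr 1
    · rw [← lintegral_const_mul' _ _ ENNReal.ofReal_ne_top]
      apply setLIntegral_congr_fun measurableSet_Ioc
      intro t ht; dsimp only
      rw [min_eq_left ht.2]
      simp
    · rw [hK1 s hs, ← lintegral_const_mul' _ _ ENNReal.ofReal_ne_top]
      apply setLIntegral_congr_fun measurableSet_Ioi
      intro t ht; dsimp only
      rw [min_eq_right (le_of_lt (Set.mem_Ioi.mp ht)), ← mul_assoc, ← ENNReal.ofReal_mul (Real.exp_nonneg _)]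
      congr 2
      rw [show β * (s - t) = β * s + -β * t by ring, Real.exp_add]
      ring
  -- T is finite
  have hTle : T ≤ ENNReal.ofReal (Real.exp (β * s)) * RV x := by
    rw [hT, hRV_def x, ← lintegral_const_mul' _ _ ENNReal.ofReal_ne_top]
    apply lintegral_mono
    intro t
    dsimp only
    rw [← mul_assoc, ← ENNReal.ofReal_mul (Real.exp_nonneg _)]
    apply mul_le_mul_left
    apply ENNReal.ofReal_le_ofReal
    have h2 : β * Real.exp (β * (min t s - t)) ≤ β * (Real.exp (β * s) * Real.exp (-β * t)) := by
      rw [← Real.exp_add]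
      exact mul_le_mul_of_nonneg_left
        (Real.exp_le_exp.mpr (by nlinarith [min_le_right t s])) hβ.le
    nlinarith
  have hT_ne : T ≠ ⊤ :=
    (lt_of_le_of_lt hTle (ENNReal.mul_lt_top ENNReal.ofReal_lt_top (hRV_fin x))).ne
  have hA_ne : ENNReal.ofReal β * (∫⁻ u in Set.Ioc (0:ℝ) s, ∫⁻ y, RV y ∂(P u x)) ≠ ⊤ := by
    refine ne_top_of_le_ne_top hT_ne ?_
    rw [← hK3]
    exact le_add_self
  -- pointwise drift inequality in ℝ≥0∞
  have hpt : ∀ y : E, RV y + ENNReal.ofReal (φ (V y))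
      ≤ ENNReal.ofReal (V y) + ENNReal.ofReal b * C.indicator (fun _ => (1:ℝ≥0∞)) y := by
    intro y
    have h1 : (RV y).toReal + φ (V y) ≤ V y + b * C.indicator (fun _ => (1:ℝ)) y := by
      have := hdrift y
      linarith
    have hφ0 : 0 ≤ φ (V y) := (hφ_pos _ (hV_one y)).le
    have hind : 0 ≤ b * C.indicator (fun _ => (1:ℝ)) y :=
      mul_nonneg hb (Set.indicator_nonneg (fun _ _ => zero_le_one) y)
    calc RV y + ENNReal.ofReal (φ (V y))
        = ENNReal.ofReal ((RV y).toReal + φ (V y)) := by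
          rw [ENNReal.ofReal_add ENNReal.toReal_nonneg hφ0,
            ENNReal.ofReal_toReal (hRV_fin y).ne]
      _ ≤ ENNReal.ofReal (V y + b * C.indicator (fun _ => (1:ℝ)) y) :=
          ENNReal.ofReal_le_ofReal h1
      _ = ENNReal.ofReal (V y) + ENNReal.ofReal (b * C.indicator (fun _ => (1:ℝ)) y) :=
          ENNReal.ofReal_add (le_trans zero_le_one (hV_one y)) hind
      _ = ENNReal.ofReal (V y) + ENNReal.ofReal b * C.indicator (fun _ => (1:ℝ≥0∞)) y := by
          congr 1
          rw [ENNReal.ofReal_mul hb]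
          congr 1
          by_cases hy : y ∈ C <;> simp [hy]
  -- integrated drift inequality
  have hint : ∀ u : ℝ, (∫⁻ y, RV y ∂(P u x)) + (∫⁻ y, ENNReal.ofReal (φ (V y)) ∂(P u x))
      ≤ PV u x + ENNReal.ofReal b * P u x C := by
    intro u
    rw [← lintegral_add_left hRVm]
    have h2 : PV u x + ENNReal.ofReal b * P u x C
        = ∫⁻ y, (ENNReal.ofReal (V y)
            + ENNReal.ofReal b * C.indicator (fun _ => (1:ℝ≥0∞)) y) ∂(P u x) := by
      rw [lintegral_add_left hVm', lintegral_const_mul' _ _ ENNReal.ofReal_ne_top,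
        lintegral_indicator_const hC, one_mul, hPV_def u x]
    rw [h2]
    exact lintegral_mono hpt
  have hint2 : (∫⁻ u in Set.Ioc (0:ℝ) s, ∫⁻ y, RV y ∂(P u x))
        + (∫⁻ u in Set.Ioc (0:ℝ) s, ∫⁻ y, ENNReal.ofReal (φ (V y)) ∂(P u x))
      ≤ (∫⁻ u in Set.Ioc (0:ℝ) s, PV u x)
        + ENNReal.ofReal b * ∫⁻ u in Set.Ioc (0:ℝ) s, P u x C := by
    rw [← lintegral_add_left hFm, ← lintegral_const_mul' _ _ ENNReal.ofReal_ne_top,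
      ← lintegral_add_left hfm]
    exact lintegral_mono fun u => hint u
  -- final assembly
  have hmain : ((∫⁻ y, RV y ∂(P s x)) + ENNReal.ofReal β *
        (∫⁻ u in Set.Ioc (0:ℝ) s, ∫⁻ y, ENNReal.ofReal (φ (V y)) ∂(P u x)))
        + ENNReal.ofReal β * (∫⁻ u in Set.Ioc (0:ℝ) s, ∫⁻ y, RV y ∂(P u x))
      ≤ (RV x + ENNReal.ofReal β * ENNReal.ofReal b *
          (∫⁻ u in Set.Ioc (0:ℝ) s, P u x C))
        + ENNReal.ofReal β * (∫⁻ u in Set.Ioc (0:ℝ) s, ∫⁻ y, RV y ∂(P u x)) := by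
    calc ((∫⁻ y, RV y ∂(P s x)) + ENNReal.ofReal β *
            (∫⁻ u in Set.Ioc (0:ℝ) s, ∫⁻ y, ENNReal.ofReal (φ (V y)) ∂(P u x)))
            + ENNReal.ofReal β * (∫⁻ u in Set.Ioc (0:ℝ) s, ∫⁻ y, RV y ∂(P u x))
        = (∫⁻ y, RV y ∂(P s x)) + ENNReal.ofReal β *
            ((∫⁻ u in Set.Ioc (0:ℝ) s, ∫⁻ y, RV y ∂(P u x))
              + (∫⁻ u in Set.Ioc (0:ℝ) s, ∫⁻ y, ENNReal.ofReal (φ (V y)) ∂(P u x))) := by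
          ring
      _ ≤ (∫⁻ y, RV y ∂(P s x)) + ENNReal.ofReal β *
            ((∫⁻ u in Set.Ioc (0:ℝ) s, PV u x)
              + ENNReal.ofReal b * ∫⁻ u in Set.Ioc (0:ℝ) s, P u x C) :=
          add_le_add_right (mul_le_mul_right hint2 _) _
      _ = (ENNReal.ofReal β * (∫⁻ u in Set.Ioc (0:ℝ) s, PV u x) + (∫⁻ y, RV y ∂(P s x)))
            + ENNReal.ofReal β * (ENNReal.ofReal b * ∫⁻ u in Set.Ioc (0:ℝ) s, P u x C) := by
          ring
      _ = T + ENNReal.ofReal β * (ENNReal.ofReal b * ∫⁻ u in Set.Ioc (0:ℝ) s, P u x C) := by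
          rw [← hK2]
      _ = (RV x + ENNReal.ofReal β * (∫⁻ u in Set.Ioc (0:ℝ) s, ∫⁻ y, RV y ∂(P u x)))
            + ENNReal.ofReal β * (ENNReal.ofReal b * ∫⁻ u in Set.Ioc (0:ℝ) s, P u x C) := by
          rw [hK3]
      _ = (RV x + ENNReal.ofReal β * ENNReal.ofReal b *
            (∫⁻ u in Set.Ioc (0:ℝ) s, P u x C))
            + ENNReal.ofReal β * (∫⁻ u in Set.Ioc (0:ℝ) s, ∫⁻ y, RV y ∂(P u x)) := by
          ring
  exact (ENNReal.add_le_add_iff_right hA_ne).mp hmain
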